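/- arXiv:1203.5233 — 2 statements merged into one kernel-verified Lean document; each statement's English description precedes it below -/
import Mathlib

section
/- Under the model y_i | θ_i ~ N(θ_i, V) independently and θ_i ~ N(x_i^T β, A) independently for i=1,...,m, with flat prior π(β)=1 and V, A > 0 known, the posterior distribution of θ = (θ_1,...,θ_m)^T given y is multivariate normal with mean (1-B)y + B P_X y and covariance matrix V((1-B)I_m + B P_X), where B = V/(V+A) and P_X = X(X^T X)^{-1} X^T with X = (x_1,...,x_m)^T of full column rank p < m. -/
open Matrix MeasureTheory Real

noncomputable def projX {m p : ℕ} (X : Matrix (Fin m) (Fin p) ℝ) : Matrix (Fin m) (Fin m) ℝ :=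
  X * (Xᵀ * X)⁻¹ * Xᵀ

/-- Density of the multivariate normal distribution `N(μ, Σ)` on `ℝ^n`. -/
noncomputable def mvGaussPdf {n : ℕ} (μ : Fin n → ℝ) (S : Matrix (Fin n) (Fin n) ℝ)
    (x : Fin n → ℝ) : ℝ :=
  (2 * π) ^ (-(n : ℝ) / 2) * S.det ^ (-(1 : ℝ) / 2) *
    Real.exp (-((x - μ) ⬝ᵥ S⁻¹.mulVec (x - μ)) / 2)

lemma proj_mul_aux {n : ℕ} (P : Matrix (Fin n) (Fin n) ℝ) (hP2 : P * P = P)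
    (a b c d : ℝ) : (a • (1 : Matrix (Fin n) (Fin n) ℝ) + b • P) * (c • 1 + d • P)
      = (a * c) • 1 + (a * d + b * c + b * d) • P := by
  simp only [Matrix.add_mul, Matrix.mul_add, Matrix.smul_mul, Matrix.mul_smul,
    Matrix.one_mul, Matrix.mul_one, hP2, smul_smul]
  module

lemma prod_exp_aux {n : ℕ} (k : ℝ) (e : Fin n → ℝ) :
    (∏ i, k * Real.exp (e i)) = k ^ n * Real.exp (∑ i, e i) := by
  rw [Finset.prod_mul_distrib, Finset.prod_const, Real.exp_sum, Finset.card_univ,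
    Fintype.card_fin]

lemma dot_sub_sub {n : ℕ} (u w : Fin n → ℝ) :
    (u - w) ⬝ᵥ (u - w) = u ⬝ᵥ u - 2 * (u ⬝ᵥ w) + w ⬝ᵥ w := by
  simp only [dotProduct_sub, sub_dotProduct]
  rw [dotProduct_comm w u]
  ring

lemma sum_neg_sq_div {n : ℕ} (u : Fin n → ℝ) (a : ℝ) :
    (∑ i, -(u i) ^ 2 / a) = -(u ⬝ᵥ u) / a := by
  rw [← Finset.sum_div, dotProduct]
  congr 1
  rw [← Finset.sum_neg_distrib]
  congr 1
  funext i
  ring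

set_option maxHeartbeats 1600000 in
/-- Under `y_i | θ_i ~ N(θ_i, V)`, `θ_i ~ N(x_iᵀβ, A)` independently, with flat
prior `π(β) = 1` and `V, A > 0` known, the posterior of `θ` given `y` (obtained by
integrating the likelihood times prior over `β`) is multivariate normal with mean
`(1-B) y + B P_X y` and covariance `V((1-B) I_m + B P_X)`, where `B = V/(V+A)` and
`P_X = X(XᵀX)⁻¹Xᵀ`, `X` of full column rank `p < m`. -/
theorem statement0 {m p : ℕ} (hpm : p < m) (X : Matrix (Fin m) (Fin p) ℝ) (hX : X.rank = p)
    (V A : ℝ) (hV : 0 < V) (hA : 0 < A) (B : ℝ) (hB : B = V / (V + A))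
    (y : Fin m → ℝ) :
    ∃ c > 0, ∀ θ : Fin m → ℝ,
      (∫ β : Fin p → ℝ,
          (∏ i, (Real.sqrt (2 * π * V))⁻¹ * Real.exp (-(y i - θ i) ^ 2 / (2 * V))) *
          (∏ i, (Real.sqrt (2 * π * A))⁻¹ *
            Real.exp (-(θ i - X.mulVec β i) ^ 2 / (2 * A))))
        = c * mvGaussPdf
            (fun i => (1 - B) * y i + B * (projX X).mulVec y i)
            (V • ((1 - B) • (1 : Matrix (Fin m) (Fin m) ℝ) + B • projX X)) θ := by
  have hVA : 0 < V + A := by linarith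
  have hB0 : 0 < B := by rw [hB]; positivity
  have hB1 : 0 < 1 - B := by
    rw [hB]
    have : V / (V + A) < 1 := (div_lt_one hVA).mpr (by linarith)
    linarith
  have ha : 0 < V * (1 - B) := mul_pos hV hB1
  -- injectivity of X
  have hker : LinearMap.ker X.mulVecLin = ⊥ := by
    have h1 := X.mulVecLin.finrank_range_add_finrank_ker
    rw [Module.finrank_pi] at h1
    rw [Matrix.rank] at hX
    rw [hX, Fintype.card_fin] at h1
    have h2 : Module.finrank ℝ (LinearMap.ker X.mulVecLin) = 0 := by omega
    exact Submodule.finrank_eq_zero.mp h2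
  -- G := Xᵀ X is positive definite
  have hG : (Xᵀ * X).PosDef := by
    refine Matrix.PosDef.of_dotProduct_mulVec_pos ?_ ?_
    · rw [← conjTranspose_eq_transpose_of_trivial]
      exact isHermitian_conjTranspose_mul_self X
    · intro x hx
      have hsx : star x = x := by funext i; exact star_trivial _
      rw [hsx, ← mulVec_mulVec, dotProduct_mulVec, ← mulVec_transpose, transpose_transpose]
      have hx0 : X.mulVec x ≠ 0 := by
        rw [LinearMap.ker_eq_bot] at hker
        intro h
        exact hx (hker (by simpa using h))
      have := dotProduct_star_self_pos_iff (v := X.mulVec x) |>.mpr hx0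
      rwa [show star (X.mulVec x) = X.mulVec x from funext fun i => star_trivial _] at this
  have hGdet : IsUnit (Xᵀ * X).det := (Matrix.isUnit_iff_isUnit_det _).mp hG.isUnit
  have hGr : (Xᵀ * X) * (Xᵀ * X)⁻¹ = 1 := Matrix.mul_nonsing_inv _ hGdet
  have hGl : (Xᵀ * X)⁻¹ * (Xᵀ * X) = 1 := Matrix.nonsing_inv_mul _ hGdet
  set Pm : Matrix (Fin m) (Fin m) ℝ := projX X with hPm
  -- projection facts
  have hXtP : Xᵀ * Pm = Xᵀ := by
    show Xᵀ * (X * (Xᵀ * X)⁻¹ * Xᵀ) = Xᵀ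
    rw [← Matrix.mul_assoc, ← Matrix.mul_assoc, hGr, Matrix.one_mul]
  have hP2 : Pm * Pm = Pm := by
    show X * (Xᵀ * X)⁻¹ * Xᵀ * Pm = Pm
    rw [Matrix.mul_assoc (X * (Xᵀ * X)⁻¹), hXtP]
    rfl
  have hPt : Pmᵀ = Pm := by
    show (X * (Xᵀ * X)⁻¹ * Xᵀ)ᵀ = _
    rw [Matrix.transpose_mul, Matrix.transpose_mul, Matrix.transpose_transpose,
      Matrix.transpose_nonsing_inv, Matrix.transpose_mul, Matrix.transpose_transpose,
      ← Matrix.mul_assoc]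
    rfl
  have hPsd : Pm.PosSemidef := by
    have h := (hG.inv.posSemidef).mul_mul_conjTranspose_same X
    rw [conjTranspose_eq_transpose_of_trivial] at h
    exact h
  -- symmetry and idempotence of the bilinear form
  have idem : ∀ v : Fin m → ℝ, Pm.mulVec (Pm.mulVec v) = Pm.mulVec v := by
    intro v; rw [mulVec_mulVec, hP2]
  have sym : ∀ u v : Fin m → ℝ, u ⬝ᵥ Pm.mulVec v = v ⬝ᵥ Pm.mulVec u := by
    intro u v
    rw [dotProduct_mulVec, ← mulVec_transpose, hPt, dotProduct_comm]
  have psd : ∀ v : Fin m → ℝ, 0 ≤ v ⬝ᵥ Pm.mulVec v := by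
    intro v
    have := hPsd.dotProduct_mulVec_nonneg v
    rwa [show star v = v from funext fun i => star_trivial _] at this
  -- the covariance matrix
  set Sm : Matrix (Fin m) (Fin m) ℝ :=
    V • ((1 - B) • (1 : Matrix (Fin m) (Fin m) ℝ) + B • Pm) with hSm
  have hSm' : Sm = (V * (1 - B)) • (1 : Matrix (Fin m) (Fin m) ℝ) + (V * B) • Pm := by
    rw [hSm, smul_add, smul_smul, smul_smul]
  have hSpd : Sm.PosDef := by
    refine Matrix.PosDef.of_dotProduct_mulVec_pos ?_ ?_
    · show Smᴴ = Sm
      rw [conjTranspose_eq_transpose_of_trivial, hSm', Matrix.transpose_add,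
        Matrix.transpose_smul, Matrix.transpose_smul, Matrix.transpose_one, hPt]
    · intro x hx
      have hsx : star x = x := by funext i; exact star_trivial _
      rw [hsx, hSm']
      rw [Matrix.add_mulVec, Matrix.smul_mulVec, Matrix.smul_mulVec,
        Matrix.one_mulVec, dotProduct_add, dotProduct_smul, dotProduct_smul]
      have hxx : 0 < x ⬝ᵥ x := by
        have := dotProduct_star_self_pos_iff (v := x) |>.mpr hx
        rwa [hsx] at this
      have := psd x
      have h1 : 0 < (V * (1 - B)) • (x ⬝ᵥ x) := by
        simp only [smul_eq_mul]; positivity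
      have h2 : 0 ≤ (V * B) • (x ⬝ᵥ Pm.mulVec x) := by
        simp only [smul_eq_mul]; positivity
      linarith
  have hSdet : 0 < Sm.det := hSpd.det_pos
  -- inverse of the covariance
  have hSinv : Sm⁻¹ = (V * (1 - B))⁻¹ • (1 : Matrix (Fin m) (Fin m) ℝ)
      + (-((V * (1 - B))⁻¹ * B)) • Pm := by
    apply Matrix.inv_eq_right_inv
    rw [hSm', proj_mul_aux Pm hP2]
    have e1 : V * (1 - B) * (V * (1 - B))⁻¹ = 1 := mul_inv_cancel₀ ha.ne'
    have e2 : V * (1 - B) * -((V * (1 - B))⁻¹ * B) + V * B * (V * (1 - B))⁻¹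
        + V * B * -((V * (1 - B))⁻¹ * B) = 0 := by
      have h1 : (V : ℝ) ≠ 0 := hV.ne'
      have h2 : (1 : ℝ) - B ≠ 0 := hB1.ne'
      field_simp
      ring
    rw [e1, e2]
    simp
  -- the Gaussian integral over β
  set I0 : ℝ := ∫ β : Fin p → ℝ, Real.exp (-(X.mulVec β ⬝ᵥ X.mulVec β) / (2 * A)) with hI0
  obtain ⟨K, hK0, hKlip⟩ := X.mulVecLin.exists_antilipschitzWith hker
  have hcont : Continuous fun β : Fin p → ℝ => X.mulVec β := by
    have := X.mulVecLin.continuous_of_finiteDimensional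
    exact this
  set M : ℝ := (p : ℝ) * (K : ℝ) ^ 2 + 1 with hM
  have hMpos : 0 < M := by positivity
  have hbound : ∀ v : Fin p → ℝ, v ⬝ᵥ v ≤ M * (X.mulVec v ⬝ᵥ X.mulVec v) := by
    intro v
    have hXv : 0 ≤ X.mulVec v ⬝ᵥ X.mulVec v :=
      Finset.sum_nonneg fun i _ => mul_self_nonneg _
    have hnXv : ‖X.mulVec v‖ ^ 2 ≤ X.mulVec v ⬝ᵥ X.mulVec v := by
      have hle : ‖X.mulVec v‖ ≤ Real.sqrt (X.mulVec v ⬝ᵥ X.mulVec v) := by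
        rw [pi_norm_le_iff_of_nonneg (Real.sqrt_nonneg _)]
        intro i
        rw [Real.norm_eq_abs]
        apply Real.abs_le_sqrt
        rw [pow_two]
        exact Finset.single_le_sum (f := fun j => X.mulVec v j * X.mulVec v j)
          (fun j _ => mul_self_nonneg _) (Finset.mem_univ i)
      calc ‖X.mulVec v‖ ^ 2 ≤ Real.sqrt (X.mulVec v ⬝ᵥ X.mulVec v) ^ 2 := by
            apply pow_le_pow_left₀ (norm_nonneg _) hle
        _ = X.mulVec v ⬝ᵥ X.mulVec v := Real.sq_sqrt hXv
    have hvK : ‖v‖ ≤ (K : ℝ) * ‖X.mulVec v‖ := by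
      have := hKlip.le_mul_dist v 0
      simpa [dist_zero_right, map_zero] using this
    have hvv : v ⬝ᵥ v ≤ (p : ℝ) * ‖v‖ ^ 2 := by
      rw [dotProduct]
      calc (∑ i, v i * v i) ≤ ∑ _i : Fin p, ‖v‖ ^ 2 := by
            apply Finset.sum_le_sum
            intro i _
            have h1 : |v i| ≤ ‖v‖ := by
              rw [← Real.norm_eq_abs]; exact norm_le_pi_norm v i
            calc v i * v i = |v i| ^ 2 := by rw [sq_abs]; ring
              _ ≤ ‖v‖ ^ 2 := by apply pow_le_pow_left₀ (abs_nonneg _) h1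
        _ = (p : ℝ) * ‖v‖ ^ 2 := by
            rw [Finset.sum_const, Finset.card_univ, Fintype.card_fin, nsmul_eq_mul]
    calc v ⬝ᵥ v ≤ (p : ℝ) * ‖v‖ ^ 2 := hvv
      _ ≤ (p : ℝ) * ((K : ℝ) * ‖X.mulVec v‖) ^ 2 := by
          apply mul_le_mul_of_nonneg_left _ (Nat.cast_nonneg p)
          exact pow_le_pow_left₀ (norm_nonneg _) hvK 2
      _ = (p : ℝ) * (K : ℝ) ^ 2 * ‖X.mulVec v‖ ^ 2 := by ring
      _ ≤ (p : ℝ) * (K : ℝ) ^ 2 * (X.mulVec v ⬝ᵥ X.mulVec v) := by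
          apply mul_le_mul_of_nonneg_left hnXv (by positivity)
      _ ≤ M * (X.mulVec v ⬝ᵥ X.mulVec v) := by
          apply mul_le_mul_of_nonneg_right _ hXv
          rw [hM]; linarith
  set c0 : ℝ := (M * (2 * A))⁻¹ with hc0
  have hc0pos : 0 < c0 := by rw [hc0]; positivity
  have hfint : Integrable (fun β : Fin p → ℝ =>
      Real.exp (-(X.mulVec β ⬝ᵥ X.mulVec β) / (2 * A))) := by
    have hg : Integrable (fun v : Fin p → ℝ => ∏ i, Real.exp (-c0 * (v i) ^ 2)) :=
      Integrable.fintype_prod fun _ => integrable_exp_neg_mul_sq hc0pos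
    apply hg.mono
    · apply Continuous.aestronglyMeasurable
      have hdotc : Continuous fun v : Fin p → ℝ => X.mulVec v ⬝ᵥ X.mulVec v := by
        simp only [dotProduct]
        exact continuous_finset_sum _ fun i _ =>
          ((continuous_apply i).comp hcont).mul ((continuous_apply i).comp hcont)
      exact Real.continuous_exp.comp ((hdotc.neg).div_const _)
    · apply Filter.Eventually.of_forall
      intro v
      rw [Real.norm_eq_abs, Real.norm_eq_abs, abs_of_pos (Real.exp_pos _),
        abs_of_pos (by positivity)]
      rw [show (∏ i, Real.exp (-c0 * (v i) ^ 2)) = Real.exp (∑ i, -c0 * (v i) ^ 2) from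
        (Real.exp_sum _ _).symm]
      apply Real.exp_le_exp.mpr
      have hsum : (∑ i, -c0 * (v i) ^ 2) = -c0 * (v ⬝ᵥ v) := by
        rw [dotProduct, Finset.mul_sum]
        congr 1
        funext i
        ring
      rw [hsum]
      have h2 : c0 * (v ⬝ᵥ v) ≤ (X.mulVec v ⬝ᵥ X.mulVec v) / (2 * A) := by
        calc c0 * (v ⬝ᵥ v) ≤ c0 * (M * (X.mulVec v ⬝ᵥ X.mulVec v)) :=
              mul_le_mul_of_nonneg_left (hbound v) hc0pos.le
          _ = (X.mulVec v ⬝ᵥ X.mulVec v) / (2 * A) := by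
              rw [hc0]
              field_simp
      rw [neg_div, neg_mul]
      exact neg_le_neg h2
  have hI0pos : 0 < I0 := by
    rw [hI0, integral_pos_iff_support_of_nonneg (fun v => (Real.exp_pos _).le) hfint]
    have hsupp : (Function.support fun β : Fin p → ℝ =>
        Real.exp (-(X.mulVec β ⬝ᵥ X.mulVec β) / (2 * A))) = Set.univ := by
      apply Set.eq_univ_iff_forall.mpr
      intro v
      exact (Real.exp_pos _).ne'
    rw [hsupp]
    exact isOpen_univ.measure_pos volume ⟨0, trivial⟩
  -- constants
  set CV : ℝ := (Real.sqrt (2 * π * V))⁻¹ with hCV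
  set CA : ℝ := (Real.sqrt (2 * π * A))⁻¹ with hCA
  have hCVpos : 0 < CV := by
    rw [hCV]
    have : 0 < 2 * π * V := by positivity
    positivity
  have hCApos : 0 < CA := by
    rw [hCA]
    have : 0 < 2 * π * A := by positivity
    positivity
  set sY : ℝ := -(y ⬝ᵥ y - y ⬝ᵥ (Pm *ᵥ y)) / (2 * (V + A)) with hsY
  refine ⟨CV ^ m * CA ^ m * I0 * (2 * π) ^ ((m : ℝ) / 2) * Sm.det ^ ((1 : ℝ) / 2)
      * Real.exp sY, ?_, fun θ => ?_⟩
  · apply mul_pos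
    apply mul_pos
    apply mul_pos
    apply mul_pos
    · exact mul_pos (pow_pos hCVpos m) (pow_pos hCApos m)
    · exact hI0pos
    · exact Real.rpow_pos_of_pos (by positivity) _
    · exact Real.rpow_pos_of_pos hSdet _
    · exact Real.exp_pos _
  -- reduction facts for the bilinear form
  · have r1 : (Pm *ᵥ θ) ⬝ᵥ θ = θ ⬝ᵥ (Pm *ᵥ θ) := dotProduct_comm _ _
    have r2 : (Pm *ᵥ θ) ⬝ᵥ (Pm *ᵥ θ) = θ ⬝ᵥ (Pm *ᵥ θ) := by rw [sym (Pm *ᵥ θ) θ, idem]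
    have r3 : y ⬝ᵥ (Pm *ᵥ θ) = θ ⬝ᵥ (Pm *ᵥ y) := sym y θ
    have r4 : (Pm *ᵥ θ) ⬝ᵥ y = θ ⬝ᵥ (Pm *ᵥ y) := by rw [dotProduct_comm, r3]
    have r5 : (Pm *ᵥ θ) ⬝ᵥ (Pm *ᵥ y) = θ ⬝ᵥ (Pm *ᵥ y) := by
      rw [sym (Pm *ᵥ θ) y, idem, r3]
    have r6 : (Pm *ᵥ y) ⬝ᵥ (Pm *ᵥ θ) = θ ⬝ᵥ (Pm *ᵥ y) := by rw [dotProduct_comm, r5]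
    have r7 : (Pm *ᵥ y) ⬝ᵥ θ = θ ⬝ᵥ (Pm *ᵥ y) := dotProduct_comm _ _
    have r8 : (Pm *ᵥ y) ⬝ᵥ (Pm *ᵥ y) = y ⬝ᵥ (Pm *ᵥ y) := by rw [sym (Pm *ᵥ y) y, idem]
    have r9 : (Pm *ᵥ y) ⬝ᵥ y = y ⬝ᵥ (Pm *ᵥ y) := dotProduct_comm _ _
    have r10 : y ⬝ᵥ θ = θ ⬝ᵥ y := dotProduct_comm _ _
    -- the difference from the posterior mean
    have hdfun : (θ - fun i => (1 - B) * y i + B * (Pm *ᵥ y) i)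
        = θ - ((1 - B) • y + B • (Pm *ᵥ y)) := by
      funext i
      simp [Pi.sub_apply, Pi.add_apply, Pi.smul_apply, smul_eq_mul]
    have hPd : Pm *ᵥ (θ - ((1 - B) • y + B • (Pm *ᵥ y)))
        = Pm *ᵥ θ - ((1 - B) • (Pm *ᵥ y) + B • (Pm *ᵥ y)) := by
      rw [mulVec_sub, Matrix.mulVec_add, mulVec_smul, mulVec_smul, idem]
    have hSd : Sm⁻¹ *ᵥ (θ - ((1 - B) • y + B • (Pm *ᵥ y)))
        = (V * (1 - B))⁻¹ • (θ - ((1 - B) • y + B • (Pm *ᵥ y)))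
          + (-((V * (1 - B))⁻¹ * B)) • (Pm *ᵥ θ - ((1 - B) • (Pm *ᵥ y) + B • (Pm *ᵥ y))) := by
      rw [hSinv, Matrix.add_mulVec, Matrix.smul_mulVec, Matrix.smul_mulVec,
        Matrix.one_mulVec, hPd]
    -- the key scalar identity
    have key : -((y - θ) ⬝ᵥ (y - θ)) / (2 * V)
          + -((θ - Pm *ᵥ θ) ⬝ᵥ (θ - Pm *ᵥ θ)) / (2 * A)
        = sY + -((θ - ((1 - B) • y + B • (Pm *ᵥ y))) ⬝ᵥ
            (Sm⁻¹ *ᵥ (θ - ((1 - B) • y + B • (Pm *ᵥ y))))) / 2 := by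
      rw [hSd, hsY]
      simp only [dotProduct_sub, sub_dotProduct, dotProduct_add, add_dotProduct,
        dotProduct_smul, smul_dotProduct, smul_eq_mul,
        r1, r2, r3, r4, r5, r6, r7, r8, r9, r10]
      generalize θ ⬝ᵥ θ = t1
      generalize θ ⬝ᵥ (Pm *ᵥ θ) = t2
      generalize θ ⬝ᵥ y = t3
      generalize θ ⬝ᵥ (Pm *ᵥ y) = t4
      generalize y ⬝ᵥ y = t5
      generalize y ⬝ᵥ (Pm *ᵥ y) = t6
      rw [hB]
      have hA0 : A ≠ 0 := hA.ne'
      have hV0 : V ≠ 0 := hV.ne'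
      have hVA0 : V + A ≠ 0 := hVA.ne'
      field_simp
      ring_nf
      field_simp
      ring
    -- rewriting the V-product
    have hexpV : (∏ i, CV * Real.exp (-(y i - θ i) ^ 2 / (2 * V)))
        = CV ^ m * Real.exp (-((y - θ) ⬝ᵥ (y - θ)) / (2 * V)) := by
      rw [prod_exp_aux]
      congr 1
      rw [show (∑ i, -(y i - θ i) ^ 2 / (2 * V)) = ∑ i, -((y - θ) i) ^ 2 / (2 * V) by
        simp [Pi.sub_apply], sum_neg_sq_div]
    have hexpA : ∀ β : Fin p → ℝ, (∏ i, CA * Real.exp (-(θ i - X.mulVec β i) ^ 2 / (2 * A)))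
        = CA ^ m * Real.exp (-((θ - X *ᵥ β) ⬝ᵥ (θ - X *ᵥ β)) / (2 * A)) := by
      intro β
      rw [prod_exp_aux]
      congr 1
      rw [show (∑ i, -(θ i - X.mulVec β i) ^ 2 / (2 * A))
          = ∑ i, -((θ - X *ᵥ β) i) ^ 2 / (2 * A) by simp [Pi.sub_apply], sum_neg_sq_div]
    -- the inner Gaussian integral over β
    have hJ : (∫ β : Fin p → ℝ, Real.exp (-((θ - X *ᵥ β) ⬝ᵥ (θ - X *ᵥ β)) / (2 * A)))
        = Real.exp (-((θ - Pm *ᵥ θ) ⬝ᵥ (θ - Pm *ᵥ θ)) / (2 * A)) * I0 := by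
      have hXb0 : X *ᵥ ((Xᵀ * X)⁻¹ *ᵥ (Xᵀ *ᵥ θ)) = Pm *ᵥ θ := by
        rw [mulVec_mulVec, mulVec_mulVec, hPm]
        rfl
      have horth : ∀ β : Fin p → ℝ, (θ - Pm *ᵥ θ) ⬝ᵥ (X *ᵥ β) = 0 := by
        intro β
        rw [dotProduct_mulVec, ← mulVec_transpose]
        have h0 : Xᵀ *ᵥ (θ - Pm *ᵥ θ) = 0 := by
          rw [mulVec_sub, mulVec_mulVec, hXtP, sub_self]
        rw [h0, zero_dotProduct]
      calc (∫ β : Fin p → ℝ, Real.exp (-((θ - X *ᵥ β) ⬝ᵥ (θ - X *ᵥ β)) / (2 * A)))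
          = ∫ β : Fin p → ℝ, Real.exp (-((θ - X *ᵥ (β + (Xᵀ * X)⁻¹ *ᵥ (Xᵀ *ᵥ θ)))
              ⬝ᵥ (θ - X *ᵥ (β + (Xᵀ * X)⁻¹ *ᵥ (Xᵀ *ᵥ θ)))) / (2 * A)) :=
            (integral_add_right_eq_self _ _).symm
        _ = ∫ β : Fin p → ℝ, Real.exp (-((θ - Pm *ᵥ θ) ⬝ᵥ (θ - Pm *ᵥ θ)) / (2 * A))
              * Real.exp (-(X *ᵥ β ⬝ᵥ X *ᵥ β) / (2 * A)) := by
            congr 1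
            funext β
            rw [← Real.exp_add]
            congr 1
            have hsplit : θ - X *ᵥ (β + (Xᵀ * X)⁻¹ *ᵥ (Xᵀ *ᵥ θ))
                = (θ - Pm *ᵥ θ) - X *ᵥ β := by
              rw [Matrix.mulVec_add, hXb0]
              abel
            rw [hsplit, dot_sub_sub, horth β]
            ring
        _ = Real.exp (-((θ - Pm *ᵥ θ) ⬝ᵥ (θ - Pm *ᵥ θ)) / (2 * A)) * I0 := by
            rw [MeasureTheory.integral_const_mul, hI0]
    -- rpow cancellation
    have hc1 : (2 * π) ^ ((m : ℝ) / 2) * (2 * π) ^ (-(m : ℝ) / 2) = 1 := by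
      rw [← Real.rpow_add (by positivity), show ((m : ℝ) / 2 + -(m : ℝ) / 2) = 0 by ring,
        Real.rpow_zero]
    have hc2 : Sm.det ^ ((1 : ℝ) / 2) * Sm.det ^ (-(1 : ℝ) / 2) = 1 := by
      rw [← Real.rpow_add hSdet, show ((1 : ℝ) / 2 + -(1 : ℝ) / 2) = 0 by ring,
        Real.rpow_zero]
    -- putting it all together
    calc (∫ β : Fin p → ℝ,
            (∏ i, CV * Real.exp (-(y i - θ i) ^ 2 / (2 * V))) *
            (∏ i, CA * Real.exp (-(θ i - X.mulVec β i) ^ 2 / (2 * A))))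
        = ∫ β : Fin p → ℝ, (CV ^ m * Real.exp (-((y - θ) ⬝ᵥ (y - θ)) / (2 * V)) * CA ^ m)
            * Real.exp (-((θ - X *ᵥ β) ⬝ᵥ (θ - X *ᵥ β)) / (2 * A)) := by
          congr 1
          funext β
          rw [hexpV, hexpA β]
          ring
      _ = (CV ^ m * Real.exp (-((y - θ) ⬝ᵥ (y - θ)) / (2 * V)) * CA ^ m)
            * ∫ β : Fin p → ℝ, Real.exp (-((θ - X *ᵥ β) ⬝ᵥ (θ - X *ᵥ β)) / (2 * A)) :=
          MeasureTheory.integral_const_mul _ _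
      _ = CV ^ m * CA ^ m * I0 * Real.exp (-((y - θ) ⬝ᵥ (y - θ)) / (2 * V)
            + -((θ - Pm *ᵥ θ) ⬝ᵥ (θ - Pm *ᵥ θ)) / (2 * A)) := by
          rw [hJ, Real.exp_add]
          ring
      _ = CV ^ m * CA ^ m * I0 * Real.exp (sY
            + -((θ - ((1 - B) • y + B • (Pm *ᵥ y))) ⬝ᵥ
              (Sm⁻¹ *ᵥ (θ - ((1 - B) • y + B • (Pm *ᵥ y))))) / 2) := by
          rw [key]
      _ = (CV ^ m * CA ^ m * I0 * (2 * π) ^ ((m : ℝ) / 2) * Sm.det ^ ((1 : ℝ) / 2)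
            * Real.exp sY) * mvGaussPdf (fun i => (1 - B) * y i + B * (Pm *ᵥ y) i) Sm θ := by
          rw [mvGaussPdf, hdfun, Real.exp_add]
          calc CV ^ m * CA ^ m * I0 * (Real.exp sY * Real.exp (-((θ - ((1 - B) • y
                  + B • (Pm *ᵥ y))) ⬝ᵥ (Sm⁻¹ *ᵥ (θ - ((1 - B) • y + B • (Pm *ᵥ y))))) / 2))
              = (CV ^ m * CA ^ m * I0)
                * (((2 * π) ^ ((m : ℝ) / 2) * (2 * π) ^ (-(m : ℝ) / 2))
                  * (Sm.det ^ ((1 : ℝ) / 2) * Sm.det ^ (-(1 : ℝ) / 2))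
                  * (Real.exp sY * Real.exp (-((θ - ((1 - B) • y + B • (Pm *ᵥ y))) ⬝ᵥ
                      (Sm⁻¹ *ᵥ (θ - ((1 - B) • y + B • (Pm *ᵥ y))))) / 2))) := by
                rw [hc1, hc2]
                ring
            _ = _ := by ring
end

section
/- For the random effects model y = Xβ + u + e with u ~ N(0, A I_m), e ~ N(0, V I_m) independent, and X of full column rank p < m, the estimator θ̂^B = (1-B)y + B P_X y (where B = V/(V+A), P_X = X(X^T X)^{-1} X^T) is the best linear unbiased predictor of θ = Xβ + u: among all predictors of the form Cy + b satisfying E[Cy + b] = E[θ] for all β, the choice C = (1-B)I_m + B P_X, b = 0 minimizes the mean squared prediction error matrix E[(Cy+b-θ)(Cy+b-θ)^T] in the Loewner order. -/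
open Matrix MeasureTheory

lemma int_mul {Ω : Type*} [MeasurableSpace Ω] {P : Measure Ω} {f g : Ω → ℝ}
    (hf : MemLp f 2 P) (hg : MemLp g 2 P) :
    Integrable (fun ω => f ω * g ω) P := by
  have h : MemLp (fun ω => f ω * g ω) 1 P := memLp_one_iff_integrable.2 (hf.integrable_mul hg)
  rw [memLp_one_iff_integrable] at h
  exact h

lemma second_moment {Ω : Type*} [MeasurableSpace Ω] (P : Measure Ω) [IsProbabilityMeasure P]
    {m : ℕ} (u e : Ω → Fin m → ℝ) (A V : ℝ)
    (hu2 : ∀ i, MemLp (fun ω => u ω i) 2 P)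
    (he2 : ∀ i, MemLp (fun ω => e ω i) 2 P)
    (hcovu : ∀ i j, ∫ ω, u ω i * u ω j ∂P = if i = j then A else 0)
    (hcove : ∀ i j, ∫ ω, e ω i * e ω j ∂P = if i = j then V else 0)
    (hcovue : ∀ i j, ∫ ω, u ω i * e ω j ∂P = 0)
    (M N : Matrix (Fin m) (Fin m) ℝ) (i j : Fin m) :
    ∫ ω, (M.mulVec (u ω) i + N.mulVec (e ω) i) * (M.mulVec (u ω) j + N.mulVec (e ω) j) ∂P
      = A * (M * Mᵀ) i j + V * (N * Nᵀ) i j := by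
  have hIuu : ∀ k l, Integrable (fun ω => u ω k * u ω l) P := fun k l => int_mul (hu2 k) (hu2 l)
  have hIue : ∀ k l, Integrable (fun ω => u ω k * e ω l) P := fun k l => int_mul (hu2 k) (he2 l)
  have hIeu : ∀ k l, Integrable (fun ω => e ω k * u ω l) P := fun k l => int_mul (he2 k) (hu2 l)
  have hIee : ∀ k l, Integrable (fun ω => e ω k * e ω l) P := fun k l => int_mul (he2 k) (he2 l)
  have hcoveu : ∀ k l, ∫ ω, e ω k * u ω l ∂P = 0 := by
    intro k l
    rw [show (fun ω => e ω k * u ω l) = fun ω => u ω l * e ω k from funext fun ω => mul_comm _ _]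
    exact hcovue l k
  -- summand
  set g : Fin m → Fin m → Ω → ℝ := fun k l ω =>
    (M i k * u ω k + N i k * e ω k) * (M j l * u ω l + N j l * e ω l) with hg
  have hgring : ∀ k l, g k l = fun ω =>
      M i k * M j l * (u ω k * u ω l) + M i k * N j l * (u ω k * e ω l)
      + N i k * M j l * (e ω k * u ω l) + N i k * N j l * (e ω k * e ω l) :=
    fun k l => funext fun ω => by simp only [hg]; ring
  have hIg : ∀ k l, Integrable (g k l) P := by
    intro k l
    rw [hgring]
    exact ((((hIuu k l).const_mul _).add ((hIue k l).const_mul _)).add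
      ((hIeu k l).const_mul _)).add ((hIee k l).const_mul _)
  have hintg : ∀ k l, ∫ ω, g k l ω ∂P
      = M i k * M j l * (if k = l then A else 0) + N i k * N j l * (if k = l then V else 0) := by
    intro k l
    simp only [hgring]
    have I1 : Integrable (fun ω => M i k * M j l * (u ω k * u ω l)) P := (hIuu k l).const_mul _
    have I2 : Integrable (fun ω => M i k * N j l * (u ω k * e ω l)) P := (hIue k l).const_mul _
    have I3 : Integrable (fun ω => N i k * M j l * (e ω k * u ω l)) P := (hIeu k l).const_mul _
    have I4 : Integrable (fun ω => N i k * N j l * (e ω k * e ω l)) P := (hIee k l).const_mul _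
    have I12 : Integrable (fun ω => M i k * M j l * (u ω k * u ω l)
        + M i k * N j l * (u ω k * e ω l)) P := I1.add I2
    have I123 : Integrable (fun ω => M i k * M j l * (u ω k * u ω l)
        + M i k * N j l * (u ω k * e ω l) + N i k * M j l * (e ω k * u ω l)) P := I12.add I3
    rw [integral_add I123 I4, integral_add I12 I3, integral_add I1 I2,
        integral_const_mul, integral_const_mul, integral_const_mul, integral_const_mul,
        hcovu, hcove, hcovue, hcoveu]
    ring
  have hexpand : ∀ ω, (M.mulVec (u ω) i + N.mulVec (e ω) i)
      * (M.mulVec (u ω) j + N.mulVec (e ω) j) = ∑ k, ∑ l, g k l ω := by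
    intro ω
    have h1 : M.mulVec (u ω) i + N.mulVec (e ω) i = ∑ k, (M i k * u ω k + N i k * e ω k) := by
      simp [Matrix.mulVec, dotProduct, Finset.sum_add_distrib]
    have h2 : M.mulVec (u ω) j + N.mulVec (e ω) j = ∑ l, (M j l * u ω l + N j l * e ω l) := by
      simp [Matrix.mulVec, dotProduct, Finset.sum_add_distrib]
    rw [h1, h2, Finset.sum_mul_sum]
  calc ∫ ω, (M.mulVec (u ω) i + N.mulVec (e ω) i)
      * (M.mulVec (u ω) j + N.mulVec (e ω) j) ∂P
      = ∫ ω, ∑ k, ∑ l, g k l ω ∂P := by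
        exact integral_congr_ae (Filter.Eventually.of_forall hexpand)
    _ = ∑ k, ∑ l, ∫ ω, g k l ω ∂P := by
        rw [integral_finset_sum _ fun k _ => integrable_finset_sum _ fun l _ => hIg k l]
        exact Finset.sum_congr rfl fun k _ => integral_finset_sum _ fun l _ => hIg k l
    _ = A * (M * Mᵀ) i j + V * (N * Nᵀ) i j := by
        simp only [hintg]
        simp [Matrix.mul_apply, Matrix.transpose_apply, Finset.mul_sum, mul_ite, mul_zero,
          Finset.sum_add_distrib, Finset.sum_ite_eq, mul_comm, mul_left_comm]

lemma psd_smul {n : Type*} [Fintype n] {M : Matrix n n ℝ} (hM : M.PosSemidef) {c : ℝ}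
    (hc : 0 ≤ c) : (c • M).PosSemidef := by
  refine ⟨?_, fun x => ?_⟩
  · show (c • M)ᴴ = c • M
    rw [Matrix.conjTranspose_smul, hM.1]
    simp
  · exact (hM.smul hc).2 x

lemma isUnit_gram {m p : ℕ} (X : Matrix (Fin m) (Fin p) ℝ) (hX : X.rank = p) :
    IsUnit (Xᵀ * X) := by
  rw [← Matrix.mulVec_surjective_iff_isUnit]
  have hr : (Xᵀ * X).rank = p := by rw [Matrix.rank_transpose_mul_self, hX]
  have htop : LinearMap.range (Xᵀ * X).mulVecLin = ⊤ := by
    apply Submodule.eq_top_of_finrank_eq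
    rw [Module.finrank_fin_fun]
    exact hr
  intro v
  obtain ⟨w, hw⟩ := LinearMap.range_eq_top.mp htop v
  exact ⟨w, hw⟩

/-- In the random effects model `y = Xβ + u + e`, with `u ~ (0, A I_m)`,
`e ~ (0, V I_m)` uncorrelated and `X` of full column rank `p < m`, the estimator
`θ̂^B = ((1-B) I + B P_X) y` is the best linear unbiased predictor of `θ = Xβ + u`:
among all predictors `C y + b` that are unbiased for every `β`, the choice
`C = (1-B) I + B P_X`, `b = 0` minimizes the mean squared prediction error matrix
in the Loewner order. -/
theorem statement1 {m p : ℕ} (hpm : p < m) (X : Matrix (Fin m) (Fin p) ℝ) (hX : X.rank = p)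
    (A V : ℝ) (hA : 0 < A) (hV : 0 < V)
    {Ω : Type*} [MeasurableSpace Ω] (P : Measure Ω) [IsProbabilityMeasure P]
    (u e : Ω → Fin m → ℝ) (β : Fin p → ℝ)
    (hu2 : ∀ i, MemLp (fun ω => u ω i) 2 P)
    (he2 : ∀ i, MemLp (fun ω => e ω i) 2 P)
    (hu0 : ∀ i, ∫ ω, u ω i ∂P = 0)
    (he0 : ∀ i, ∫ ω, e ω i ∂P = 0)
    (hcovu : ∀ i j, ∫ ω, u ω i * u ω j ∂P = if i = j then A else 0)
    (hcove : ∀ i j, ∫ ω, e ω i * e ω j ∂P = if i = j then V else 0)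
    (hcovue : ∀ i j, ∫ ω, u ω i * e ω j ∂P = 0)
    (θ : Ω → Fin m → ℝ) (hθ : ∀ ω, θ ω = X.mulVec β + u ω)
    (y : Ω → Fin m → ℝ) (hy : ∀ ω, y ω = θ ω + e ω)
    (B : ℝ) (hB : B = V / (V + A))
    -- the MSE matrix of a linear predictor `C y + b`
    (mseMat : Matrix (Fin m) (Fin m) ℝ → (Fin m → ℝ) → Matrix (Fin m) (Fin m) ℝ)
    (hmse : ∀ C b, mseMat C b = Matrix.of fun i j =>
      ∫ ω, (C.mulVec (y ω) i + b i - θ ω i) * (C.mulVec (y ω) j + b j - θ ω j) ∂P)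
    (C : Matrix (Fin m) (Fin m) ℝ) (b : Fin m → ℝ)
    (hunbiased : ∀ β' : Fin p → ℝ, ∀ i,
      ∫ ω, (C.mulVec (X.mulVec β' + u ω + e ω) i + b i) ∂P = X.mulVec β' i) :
    (mseMat C b
      - mseMat ((1 - B) • (1 : Matrix (Fin m) (Fin m) ℝ) + B • projX X) 0).PosSemidef := by
  have hVA : V + A ≠ 0 := by positivity
  set C₀ : Matrix (Fin m) (Fin m) ℝ :=
    (1 - B) • (1 : Matrix (Fin m) (Fin m) ℝ) + B • projX X with hC₀
  have hUnit : IsUnit (Xᵀ * X) := isUnit_gram X hX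
  have hUnitDet : IsUnit (Xᵀ * X).det := (Matrix.isUnit_iff_isUnit_det _).mp hUnit
  have hPX : projX X * X = X := by
    rw [projX, Matrix.mul_assoc, Matrix.mul_assoc, Matrix.nonsing_inv_mul _ hUnitDet,
      Matrix.mul_one]
  have hPsymm : (projX X)ᵀ = projX X := by
    simp [projX, Matrix.transpose_mul, Matrix.transpose_nonsing_inv,
      Matrix.transpose_transpose, Matrix.mul_assoc]
  -- expectation of the linear predictor
  have hIu1 : ∀ k, Integrable (fun ω => u ω k) P := fun k => (hu2 k).integrable one_le_two
  have hIe1 : ∀ k, Integrable (fun ω => e ω k) P := fun k => (he2 k).integrable one_le_two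
  have hmean : ∀ (β' : Fin p → ℝ) (i : Fin m),
      ∫ ω, (C.mulVec (X.mulVec β' + u ω + e ω) i + b i) ∂P
        = C.mulVec (X.mulVec β') i + b i := by
    intro β' i
    have h1 : (fun ω => C.mulVec (X.mulVec β' + u ω + e ω) i + b i)
        = fun ω => (C.mulVec (X.mulVec β') i + b i)
            + (∑ k, C i k * u ω k + ∑ k, C i k * e ω k) := by
      funext ω
      simp only [Matrix.mulVec_add, Pi.add_apply, Matrix.mulVec, dotProduct, mul_add,
        Finset.sum_add_distrib]
      ring
    have hIsum_u : Integrable (fun ω => ∑ k, C i k * u ω k) P :=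
      integrable_finset_sum _ fun k _ => (hIu1 k).const_mul _
    have hIsum_e : Integrable (fun ω => ∑ k, C i k * e ω k) P :=
      integrable_finset_sum _ fun k _ => (hIe1 k).const_mul _
    have hIsum : Integrable (fun ω => ∑ k, C i k * u ω k + ∑ k, C i k * e ω k) P :=
      hIsum_u.add hIsum_e
    rw [h1, integral_add (integrable_const _) hIsum,
      integral_add hIsum_u hIsum_e,
      integral_finset_sum _ fun k _ => (hIu1 k).const_mul _,
      integral_finset_sum _ fun k _ => (hIe1 k).const_mul _]
    simp [integral_const_mul, hu0, he0]
  have hb : b = 0 := by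
    funext i
    have h := hunbiased 0 i
    rw [hmean 0 i] at h
    simpa using h
  have hCX : C * X = X := by
    ext i j
    have h := hunbiased (Pi.single j 1) i
    rw [hmean _ i, hb] at h
    rw [Matrix.mulVec_mulVec] at h
    simpa using h
  have hC0X : C₀ * X = X := by
    rw [hC₀, Matrix.add_mul, Matrix.smul_mul, Matrix.smul_mul, Matrix.one_mul, hPX,
      ← add_smul, sub_add_cancel, one_smul]
  -- the MSE matrix of an unbiased linear predictor
  have hmsef : ∀ C' : Matrix (Fin m) (Fin m) ℝ, C' * X = X →
      mseMat C' 0 = A • ((C' - 1) * (C' - 1)ᵀ) + V • (C' * C'ᵀ) := by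
    intro C' hC'
    rw [hmse]
    ext i j
    simp only [Matrix.of_apply, Matrix.add_apply, Matrix.smul_apply, smul_eq_mul,
      Pi.zero_apply, add_zero]
    have hz : ∀ (ω : Ω) (k : Fin m), C'.mulVec (y ω) k - θ ω k
        = (C' - 1).mulVec (u ω) k + C'.mulVec (e ω) k := by
      intro ω k
      rw [hy, hθ]
      have hXβ : C'.mulVec (X.mulVec β) = X.mulVec β := by
        rw [Matrix.mulVec_mulVec, hC']
      simp only [Matrix.mulVec_add, Pi.add_apply, Pi.sub_apply, Matrix.sub_mulVec,
        Matrix.one_mulVec, hXβ]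
      ring
    have hrw : ∫ ω, (C'.mulVec (y ω) i - θ ω i) * (C'.mulVec (y ω) j - θ ω j) ∂P
        = ∫ ω, ((C' - 1).mulVec (u ω) i + C'.mulVec (e ω) i)
            * ((C' - 1).mulVec (u ω) j + C'.mulVec (e ω) j) ∂P :=
      integral_congr_ae (Filter.Eventually.of_forall fun ω => by simp only [hz])
    rw [hrw, second_moment P u e A V hu2 he2 hcovu hcove hcovue (C' - 1) C' i j]
  -- the key algebraic identity
  have h1 : A * B + V * B = V := by rw [hB]; field_simp; ring
  have h2 : V * (1 - B) - A * B = 0 := by rw [hB]; field_simp; ring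
  have hkey : A • (C₀ - 1) + V • C₀ = V • projX X := by
    rw [hC₀]
    have hlin : A • ((1 - B) • (1 : Matrix (Fin m) (Fin m) ℝ) + B • projX X - 1)
        + V • ((1 - B) • (1 : Matrix (Fin m) (Fin m) ℝ) + B • projX X)
        = (A * B + V * B) • projX X
            + (V * (1 - B) - A * B) • (1 : Matrix (Fin m) (Fin m) ℝ) := by
      module
    rw [hlin, h1, h2, zero_smul, add_zero]
  set D : Matrix (Fin m) (Fin m) ℝ := C - C₀ with hD
  have hDX : D * X = 0 := by rw [hD, Matrix.sub_mul, hCX, hC0X, sub_self]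
  have hDP : D * projX X = 0 := by
    rw [projX, ← Matrix.mul_assoc, ← Matrix.mul_assoc, hDX, Matrix.zero_mul, Matrix.zero_mul]
  have hPDt : projX X * Dᵀ = 0 := by
    have h := congrArg Matrix.transpose hDP
    rwa [Matrix.transpose_mul, hPsymm, Matrix.transpose_zero] at h
  have hCsplit : C = C₀ + D := by rw [hD]; abel
  have hmain : mseMat C b - mseMat C₀ 0 = (A + V) • (D * Dᵀ) := by
    rw [hb, hmsef C hCX, hmsef C₀ hC0X, hCsplit]
    have expand : A • ((C₀ + D - 1) * (C₀ + D - 1)ᵀ) + V • ((C₀ + D) * (C₀ + D)ᵀ)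
        - (A • ((C₀ - 1) * (C₀ - 1)ᵀ) + V • (C₀ * C₀ᵀ))
        = (A • (C₀ - 1) + V • C₀) * Dᵀ + D * (A • (C₀ - 1) + V • C₀)ᵀ
            + (A + V) • (D * Dᵀ) := by
      simp only [Matrix.transpose_add, Matrix.transpose_sub, Matrix.transpose_smul,
        Matrix.transpose_one, Matrix.add_mul, Matrix.mul_add, Matrix.sub_mul,
        Matrix.mul_sub, Matrix.smul_mul, Matrix.mul_smul, Matrix.mul_one, Matrix.one_mul,
        smul_add, smul_sub, add_smul]
      abel
    rw [expand, hkey, Matrix.smul_mul, hPDt, Matrix.transpose_smul, hPsymm,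
      Matrix.mul_smul, hDP]
    simp
  rw [hmain]
  have hpsd : (D * Dᵀ).PosSemidef := by
    have h := Matrix.posSemidef_self_mul_conjTranspose D
    rwa [Matrix.conjTranspose_eq_transpose_of_trivial] at h
  exact psd_smul hpsd (by positivity)
end
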